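/- Let x0 < −√3/4 and let h(x) = ((x − x0)^2 + (4/9) g(x)^4)^{1/2} with g(x) = (9x(2x0 − x)/4)^{1/3}, for x ∈ [2x0, 0]. Set x_± = x0 ± (x0^2 − 3/16)^{1/2}. Then 0 < (x0^2 − 3/64)^{1/2} = h(x_+) = h(x_−) ≤ h(x) ≤ C₄(x0) for all x ∈ [2x0, 0], where C₄(x0) = max{h(2x0), h(x0), h(0)}; explicitly, C₄(x0) = |x0| if −2/3 ≤ x0 < −√3/4, while C₄(x0) = ((3/2) x0^4)^{1/3} if x0 < −2/3, and for x0 = −2/3 one has h(2x0) = h(x0) = h(0) = |x0|. -/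

import Mathlib

open Set

lemma cube_rpow (M : ℝ) (hM : 0 ≤ M) : (M ^ (3:ℕ)) ^ ((1:ℝ)/3) = M := by
  rw [← Real.rpow_natCast M 3, ← Real.rpow_mul hM]; norm_num

lemma sq_rpow_half (M : ℝ) (hM : 0 ≤ M) : (M ^ (2:ℕ)) ^ ((1:ℝ)/2) = M := by
  rw [← Real.rpow_natCast M 2, ← Real.rpow_mul hM]; norm_num

lemma rpow_half_sq (y : ℝ) (hy : 0 ≤ y) : (y ^ ((1:ℝ)/2)) ^ (2:ℕ) = y := by
  rw [← Real.rpow_natCast _ 2, ← Real.rpow_mul hy]; norm_num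

lemma rpow_four_thirds (a : ℝ) (ha : 0 ≤ a) : a ^ ((4:ℝ)/3) = (a ^ (4:ℕ)) ^ ((1:ℝ)/3) := by
  rw [← Real.rpow_natCast a 4, ← Real.rpow_mul ha]; norm_num

lemma c3 : (((9:ℝ)/4) ^ ((1:ℝ)/3)) ^ (3:ℕ) = 9/4 := by
  rw [← Real.rpow_natCast _ 3, ← Real.rpow_mul (by norm_num : (0:ℝ) ≤ 9/4)]; norm_num

lemma aux_tangent (a : ℝ) (ha : 0 ≤ a) :
    a - 3/64 ≤ ((9:ℝ)/4) ^ ((1:ℝ)/3) * a ^ ((4:ℝ)/3) := by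
  set c := ((9:ℝ)/4) ^ ((1:ℝ)/3) with hc
  have hc3 : c ^ (3:ℕ) = 9/4 := c3
  set b := a ^ ((1:ℝ)/3) with hb
  have hb3 : b ^ (3:ℕ) = a := by
    rw [hb, ← Real.rpow_natCast _ 3, ← Real.rpow_mul ha]; norm_num
  have hb4 : a ^ ((4:ℝ)/3) = b ^ (4:ℕ) := by
    rw [hb, ← Real.rpow_natCast _ 4, ← Real.rpow_mul ha]; norm_num
  rw [hb4, ← hb3]
  have key : 0 ≤ (c*b)^4 - (c*b)^3 + 27/256 := by
    nlinarith [sq_nonneg ((c*b - 3/4)*(c*b + 1/4)), sq_nonneg (c*b - 3/4)]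
  have e1 : (c*b)^4 = (9/4)*(c*b^4) := by linear_combination c*b^4 * hc3
  have e2 : (c*b)^3 = (9/4)*(b^3) := by linear_combination b^3 * hc3
  rw [e1, e2] at key
  linarith

lemma aux_upper (a X : ℝ) (ha : 0 ≤ a) (haX : a ≤ X) :
    a ^ ((4:ℝ)/3) ≤ a * X ^ ((1:ℝ)/3) := by
  rcases eq_or_lt_of_le ha with h | h
  · rw [← h, Real.zero_rpow (by norm_num)]; norm_num
  · rw [show (4:ℝ)/3 = 1 + 1/3 by norm_num, Real.rpow_add h, Real.rpow_one]
    exact mul_le_mul_of_nonneg_left (Real.rpow_le_rpow ha haX (by norm_num)) ha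

set_option maxHeartbeats 1000000 in
theorem h_bounds_large_x0
    (x0 : ℝ) (hx0 : x0 < -Real.sqrt 3 / 4)
    (g h : ℝ → ℝ)
    (hg : ∀ x : ℝ, g x = (9 * x * (2 * x0 - x) / 4) ^ ((1 : ℝ) / 3))
    (hh : ∀ x : ℝ, h x = ((x - x0) ^ 2 + (4 / 9) * (g x) ^ 4) ^ ((1 : ℝ) / 2))
    (xp xm : ℝ)
    (hxp : xp = x0 + (x0 ^ 2 - 3 / 16) ^ ((1 : ℝ) / 2))
    (hxm : xm = x0 - (x0 ^ 2 - 3 / 16) ^ ((1 : ℝ) / 2))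
    (C4 : ℝ) (hC4 : C4 = max (h (2 * x0)) (max (h x0) (h 0))) :
    0 < (x0 ^ 2 - 3 / 64) ^ ((1 : ℝ) / 2) ∧
    h xp = (x0 ^ 2 - 3 / 64) ^ ((1 : ℝ) / 2) ∧
    h xm = (x0 ^ 2 - 3 / 64) ^ ((1 : ℝ) / 2) ∧
    (∀ x ∈ Icc (2 * x0) 0, h xp ≤ h x ∧ h x ≤ C4) ∧
    (-2 / 3 ≤ x0 → C4 = |x0|) ∧
    (x0 < -2 / 3 → C4 = ((3 / 2) * x0 ^ 4) ^ ((1 : ℝ) / 3)) ∧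
    (x0 = -2 / 3 → h (2 * x0) = |x0| ∧ h x0 = |x0| ∧ h 0 = |x0|) := by
  set c : ℝ := ((9:ℝ)/4) ^ ((1:ℝ)/3) with hcdef
  have hcpos : 0 < c := Real.rpow_pos_of_pos (by norm_num) _
  have h3 : Real.sqrt 3 ^ 2 = 3 := Real.sq_sqrt (by norm_num)
  have h3n : 0 ≤ Real.sqrt 3 := Real.sqrt_nonneg 3
  have hx0neg : x0 < 0 := lt_of_lt_of_le hx0 (by nlinarith)
  have hX : 3/16 < x0^2 := by nlinarith
  have hXpos : 0 < x0^2 := by nlinarith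
  -- key closed form of h
  have hform : ∀ x : ℝ, 0 ≤ x * (2*x0 - x) →
      h x = ((x - x0)^2 + c * (x*(2*x0-x)) ^ ((4:ℝ)/3)) ^ ((1:ℝ)/2) := by
    intro x hx
    rw [hh, hg]
    congr 1
    have ht : (0:ℝ) ≤ 9 * x * (2*x0 - x) / 4 := by nlinarith
    have e1 : ((9 * x * (2*x0-x) / 4) ^ ((1:ℝ)/3)) ^ (4:ℕ)
        = (9 * x * (2*x0-x) / 4) ^ ((4:ℝ)/3) := by
      rw [← Real.rpow_natCast _ 4, ← Real.rpow_mul ht]; norm_num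
    rw [hcdef, e1, show 9 * x * (2*x0-x)/4 = (9/4) * (x*(2*x0-x)) by ring,
      Real.mul_rpow (by norm_num) hx,
      show (4:ℝ)/3 = 1 + 1/3 by norm_num,
      Real.rpow_add (by norm_num : (0:ℝ) < 9/4), Real.rpow_one,
      show (1:ℝ) + 1/3 = 4/3 by norm_num]
    ring
  -- endpoint values
  have habs : (x0^2) ^ ((1:ℝ)/2) = |x0| := by
    rw [← sq_abs]; exact sq_rpow_half _ (abs_nonneg _)
  have e0 : h 0 = (x0^2) ^ ((1:ℝ)/2) := by
    rw [hform 0 (by simp)]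
    congr 1
    rw [show (0:ℝ)*(2*x0-0) = 0 by ring, Real.zero_rpow (by norm_num)]
    ring
  have e2x0 : h (2*x0) = (x0^2) ^ ((1:ℝ)/2) := by
    rw [hform (2*x0) (by simp)]
    congr 1
    rw [show (2*x0)*(2*x0-2*x0) = 0 by ring, Real.zero_rpow (by norm_num)]
    ring
  have ex0 : h x0 = (c * (x0^2) ^ ((4:ℝ)/3)) ^ ((1:ℝ)/2) := by
    rw [hform x0 (by nlinarith)]
    congr 1
    rw [show x0*(2*x0-x0) = x0^2 by ring]
    ring
  have hM0 : (0:ℝ) ≤ (3/2)*x0^4 := by positivity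
  have hq : (c * (x0^2) ^ ((4:ℝ)/3)) ^ ((1:ℝ)/2) = ((3/2)*x0^4) ^ ((1:ℝ)/3) := by
    have h1 : c * (x0^2)^((4:ℝ)/3) = ((((3:ℝ)/2)*x0^4) ^ (2:ℕ)) ^ ((1:ℝ)/3) := by
      rw [rpow_four_thirds _ (sq_nonneg x0), hcdef,
        ← Real.mul_rpow (by norm_num) (by positivity)]
      congr 1
      ring
    rw [h1, ← Real.rpow_natCast (((3:ℝ)/2)*x0^4) 2, ← Real.rpow_mul hM0,
      ← Real.rpow_mul hM0]
    norm_num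
  have hC4' : C4 = max |x0| (((3/2)*x0^4) ^ ((1:ℝ)/3)) := by
    rw [hC4, e2x0, ex0, e0, habs, hq,
      max_comm (((3/2)*x0^4) ^ ((1:ℝ)/3)) |x0|, ← max_assoc, max_self]
  -- comparison
  have hnx3 : (0:ℝ) ≤ -x0 * x0^2 := mul_nonneg (by linarith) (sq_nonneg x0)
  have hcmp1 : -2/3 ≤ x0 → ((3/2)*x0^4) ^ ((1:ℝ)/3) ≤ |x0| := by
    intro h'
    have habs' : |x0| = -x0 := abs_of_neg hx0neg
    have hle : (3/2)*x0^4 ≤ |x0|^(3:ℕ) := by rw [habs']; nlinarith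
    calc ((3/2)*x0^4) ^ ((1:ℝ)/3) ≤ (|x0|^(3:ℕ)) ^ ((1:ℝ)/3) :=
          Real.rpow_le_rpow hM0 hle (by norm_num)
      _ = |x0| := cube_rpow _ (abs_nonneg _)
  have hcmp2 : x0 ≤ -2/3 → |x0| ≤ ((3/2)*x0^4) ^ ((1:ℝ)/3) := by
    intro h'
    have habs' : |x0| = -x0 := abs_of_neg hx0neg
    have hle : |x0|^(3:ℕ) ≤ (3/2)*x0^4 := by rw [habs']; nlinarith
    calc |x0| = (|x0|^(3:ℕ)) ^ ((1:ℝ)/3) := (cube_rpow _ (abs_nonneg _)).symm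
      _ ≤ ((3/2)*x0^4) ^ ((1:ℝ)/3) := Real.rpow_le_rpow (by positivity) hle (by norm_num)
  -- values at xp, xm
  have hr2 : ((x0^2 - 3/16) ^ ((1:ℝ)/2))^(2:ℕ) = x0^2 - 3/16 :=
    rpow_half_sq _ (by nlinarith)
  have hc316 : c * ((3:ℝ)/16) ^ ((4:ℝ)/3) = 9/64 := by
    rw [rpow_four_thirds _ (by norm_num : (0:ℝ) ≤ 3/16), hcdef,
      ← Real.mul_rpow (by norm_num) (by norm_num),
      show (9/4:ℝ) * ((3:ℝ)/16)^(4:ℕ) = ((9:ℝ)/64)^(3:ℕ) by norm_num]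
    exact cube_rpow _ (by norm_num)
  have hxpval : h xp = (x0^2 - 3/64) ^ ((1:ℝ)/2) := by
    have ha : xp * (2*x0 - xp) = 3/16 := by rw [hxp]; linear_combination (-1 : ℝ) * hr2
    rw [hform xp (by rw [ha]; norm_num), ha,
      show (xp - x0)^2 = x0^2 - 3/16 from by rw [hxp]; linear_combination hr2, hc316]
    congr 1
    ring
  have hxmval : h xm = (x0^2 - 3/64) ^ ((1:ℝ)/2) := by
    have ha : xm * (2*x0 - xm) = 3/16 := by rw [hxm]; linear_combination (-1 : ℝ) * hr2
    rw [hform xm (by rw [ha]; norm_num), ha,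
      show (xm - x0)^2 = x0^2 - 3/16 from by rw [hxm]; linear_combination hr2, hc316]
    congr 1
    ring
  refine ⟨Real.rpow_pos_of_pos (by nlinarith) _, hxpval, hxmval, ?_, ?_, ?_, ?_⟩
  · -- main bounds
    intro x hx
    obtain ⟨hx1, hx2⟩ := hx
    have haI : 0 ≤ x * (2*x0 - x) := by nlinarith
    have haX : x * (2*x0 - x) ≤ x0^2 := by nlinarith [sq_nonneg (x - x0)]
    have hs : (x - x0)^2 = x0^2 - x*(2*x0-x) := by ring
    constructor
    · have ht := aux_tangent (x*(2*x0-x)) haI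
      rw [← hcdef] at ht
      have hIlow : x0^2 - 3/64 ≤ (x - x0)^2 + c * (x*(2*x0-x)) ^ ((4:ℝ)/3) := by
        rw [hs]; linarith
      rw [hxpval, hform x haI]
      exact Real.rpow_le_rpow (by nlinarith) hIlow (by norm_num)
    · have h1 : c * (x*(2*x0-x)) ^ ((4:ℝ)/3) ≤ c * ((x*(2*x0-x)) * (x0^2) ^ ((1:ℝ)/3)) :=
        mul_le_mul_of_nonneg_left (aux_upper _ (x0^2) haI haX) hcpos.le
      have hX13 : (0:ℝ) ≤ (x0^2) ^ ((1:ℝ)/3) := Real.rpow_nonneg (sq_nonneg x0) _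
      have hup : (x - x0)^2 + c * (x*(2*x0-x)) ^ ((4:ℝ)/3)
          ≤ max (x0^2) (c * (x0^2) ^ ((4:ℝ)/3)) := by
        rw [hs]
        rcases le_or_gt (c * (x0^2) ^ ((1:ℝ)/3)) 1 with hcase | hcase
        · refine le_trans ?_ (le_max_left _ _)
          nlinarith
        · refine le_trans ?_ (le_max_right _ _)
          have hX43 : (x0^2 : ℝ) ^ ((4:ℝ)/3) = (x0^2) * (x0^2) ^ ((1:ℝ)/3) := by
            rw [show (4:ℝ)/3 = 1 + 1/3 by norm_num, Real.rpow_add hXpos, Real.rpow_one]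
          rw [hX43]
          nlinarith
      rw [hform x haI, hC4']
      have hbase : (0:ℝ) ≤ (x - x0)^2 + c * (x*(2*x0-x)) ^ ((4:ℝ)/3) :=
        add_nonneg (sq_nonneg _) (mul_nonneg hcpos.le (Real.rpow_nonneg haI _))
      refine le_trans (Real.rpow_le_rpow hbase hup (by norm_num)) ?_
      rcases max_cases (x0^2) (c * (x0^2) ^ ((4:ℝ)/3)) with ⟨he, _⟩ | ⟨he, _⟩
      · rw [he, habs]; exact le_max_left _ _
      · rw [he, hq]; exact le_max_right _ _
  · intro h'
    rw [hC4']
    exact max_eq_left (hcmp1 h')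
  · intro h'
    rw [hC4']
    exact max_eq_right (hcmp2 h'.le)
  · intro hx0eq
    refine ⟨by rw [e2x0, habs], ?_, by rw [e0, habs]⟩
    rw [ex0, hq, hx0eq,
      show (3/2)*((-2/3 : ℝ))^4 = ((2:ℝ)/3)^(3:ℕ) by norm_num,
      cube_rpow _ (by norm_num)]
    norm_num
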